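/- In a Segal space W, any 0-simplex in the same path component of map_W(x,y) as a homotopy equivalence is itself a homotopy equivalence. -/

import Mathlib

open CategoryTheory Simplicial Opposite

/-- Simplicial spaces: simplicial objects in simplicial sets. -/
abbrev SSp : Type 1 := CategoryTheory.SimplicialObject SSet.{0}

/-- A map of simplicial sets is a weak homotopy equivalence if its geometric
realization is a homotopy equivalence of topological spaces (equivalently, by
the Whitehead theorem, a weak homotopy equivalence, since realizations are CW
complexes). -/
def SSet.IsWeakEquiv {X Y : SSet.{0}} (f : X ⟶ Y) : Prop :=
  ∃ g : SSet.toTop.obj Y ⟶ SSet.toTop.obj X,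
    ContinuousMap.Homotopic (SSet.toTop.map f ≫ g).hom (TopCat.Hom.hom (𝟙 (SSet.toTop.obj X))) ∧
    ContinuousMap.Homotopic (g ≫ SSet.toTop.map f).hom (TopCat.Hom.hom (𝟙 (SSet.toTop.obj Y)))

section Reedy

variable (n m : ℕ) (k : Fin (m + 1))

/-- The simplicial set `S × B` for a set `S`. -/
def pasteSet (S : Type) (B : SSet.{0}) : SSet.{0} where
  obj q := S × B.obj q
  map f := TypeCat.ofHom (Prod.map id (B.map f))
  map_id q := by ext x; cases x; simp [Prod.map]; exact FunctorToTypes.map_id_apply B _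
  map_comp f g := by ext x; cases x; simp [Prod.map]; exact FunctorToTypes.map_comp_apply B _ _ _

/-- Functoriality of `pasteSet` in the set variable. -/
def pasteMap {S T : Type} (g : S → T) (B : SSet.{0}) : pasteSet S B ⟶ pasteSet T B where
  app _q := TypeCat.ofHom (Prod.map g id)
  naturality _ _ _ := rfl

/-- The external product `A □ B` of two simplicial sets, a simplicial space with
`(A □ B)_{p,q} = A_p × B_q`. -/
def extProd (A B : SSet.{0}) : SSp where
  obj p := pasteSet (A.obj p) B
  map f := pasteMap (A.map f) B
  map_id p := by
    apply NatTrans.ext; funext q; ext x; cases x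
    simp only [pasteMap, pasteSet, Prod.map, FunctorToTypes.map_id_apply, id_eq]
    exact Prod.ext (FunctorToTypes.map_id_apply A _) rfl
  map_comp f g := by
    apply NatTrans.ext; funext q; ext x; cases x
    simp only [pasteMap, pasteSet, Prod.map, FunctorToTypes.map_comp_apply, id_eq]
    exact Prod.ext (FunctorToTypes.map_comp_apply A _ _ _) rfl

/-- The sub-simplicial-space `(∂Δ[n] □ Δ[m]) ∪ (Δ[n] □ Λ[m,k])` of
`Δ[n] □ Δ[m]`: level `p` of the first (outer) variable. -/
def bhSet (p : SimplexCategoryᵒᵖ) : SSet.{0} where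
  obj q := {x : Δ[n].obj p × Δ[m].obj q //
    ¬Function.Surjective (SSet.stdSimplex.asOrderHom x.1) ∨
      Set.range (SSet.stdSimplex.asOrderHom x.2) ∪ {k} ≠ Set.univ}
  map f := TypeCat.ofHom fun x => ⟨(x.1.1, Δ[m].map f x.1.2), by
    refine x.2.imp id ?_
    intro hb h
    apply hb
    rw [Set.eq_univ_iff_forall] at h ⊢; intro j
    refine Or.imp ?_ id (h j)
    intro hj
    exact Set.range_comp_subset_range _ _ hj⟩
  map_id q := by
    ext x
    · rfl
    · exact FunctorToTypes.map_id_apply Δ[m] _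
  map_comp f g := by
    ext x
    · rfl
    · exact FunctorToTypes.map_comp_apply Δ[m] _ _ _

/-- The sub-simplicial-space `(∂Δ[n] □ Δ[m]) ∪ (Δ[n] □ Λ[m,k])` of
`Δ[n] □ Δ[m]`. -/
def bhObj : SSp where
  obj p := bhSet n m k p
  map {p p'} f :=
    { app := fun q => TypeCat.ofHom fun x => ⟨(Δ[n].map f x.1.1, x.1.2), by
        refine x.2.imp ?_ id
        intro hb h
        exact hb (Function.Surjective.of_comp h)⟩
      naturality := fun _ _ g => by ext x <;> rfl }
  map_id p := by
    apply NatTrans.ext; funext q; ext x; apply Subtype.ext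
    exact Prod.ext (FunctorToTypes.map_id_apply Δ[n] _) rfl
  map_comp f g := by
    apply NatTrans.ext; funext q; ext x; apply Subtype.ext
    exact Prod.ext (FunctorToTypes.map_comp_apply Δ[n] _ _ _) rfl

/-- The inclusion `(∂Δ[n] □ Δ[m]) ∪ (Δ[n] □ Λ[m,k]) ⟶ Δ[n] □ Δ[m]`. -/
def bhIncl : bhObj n m k ⟶ extProd Δ[n] Δ[m] where
  app p :=
    { app := fun q => TypeCat.ofHom fun x => x.1
      naturality := fun _ _ g => rfl }
  naturality p p' f := by apply NatTrans.ext; funext q; ext x <;> rfl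

end Reedy

/-- A simplicial space is Reedy fibrant if it has the right lifting property
against the pushout-products of the boundary inclusions `∂Δ[n] ⟶ Δ[n]` (in the
outer direction) with the horn inclusions `Λ[m,k] ⟶ Δ[m]` (in the inner
direction); equivalently, all matching maps are Kan fibrations. -/
def ReedyFibrant (W : SSp) : Prop :=
  ∀ (n m : ℕ) (k : Fin (m + 2)),
    HasLiftingProperty (bhIncl n (m + 1) k) (CategoryTheory.Limits.terminal.from W)

/-- The `k`-fold fiber product `W_1 ×_{W_0} ⋯ ×_{W_0} W_1` (as a simplicial
set), target of the Segal map. -/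
def fiberProd (W : SSp) (k : ℕ) : SSet.{0} where
  obj q := {p : (Fin (k + 1) → (W.obj (op ⦋0⦌)).obj q) × (Fin k → (W.obj (op ⦋1⦌)).obj q) //
    (∀ i : Fin k, (W.δ 1).app q (p.2 i) = p.1 i.castSucc) ∧
      ∀ i : Fin k, (W.δ 0).app q (p.2 i) = p.1 i.succ}
  map {q q'} f := TypeCat.ofHom fun p => ⟨(fun i => (W.obj (op ⦋0⦌)).map f (p.1.1 i),
      fun i => (W.obj (op ⦋1⦌)).map f (p.1.2 i)), by
    constructor <;> intro i
    · have h := ConcreteCategory.congr_hom ((W.δ 1).naturality f) (p.1.2 i)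
      dsimp at h ⊢
      rw [← p.2.1 i]
      exact h
    · have h := ConcreteCategory.congr_hom ((W.δ 0).naturality f) (p.1.2 i)
      dsimp at h ⊢
      rw [← p.2.2 i]
      exact h⟩
  map_id q := by
    apply ConcreteCategory.hom_ext; intro p; apply Subtype.ext; dsimp
    rw [Prod.ext_iff]
    constructor <;> funext i <;> dsimp only <;> rw [FunctorToTypes.map_id_apply]
  map_comp f g := by
    apply ConcreteCategory.hom_ext; intro p; apply Subtype.ext; dsimp
    rw [Prod.ext_iff]
    constructor <;> funext i <;> dsimp only <;> rw [FunctorToTypes.map_comp_apply]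

/-- The Segal map `φ_k : W_k ⟶ W_1 ×_{W_0} ⋯ ×_{W_0} W_1`, induced by the
inclusions `α^i : [1] ⟶ [k]`, `0 ↦ i`, `1 ↦ i + 1`. -/
def segalMap (W : SSp) (k : ℕ) : W.obj (op ⦋k⦌) ⟶ fiberProd W k where
  app q := TypeCat.ofHom fun σ => ⟨(fun i => (W.map (SimplexCategory.const ⦋0⦌ ⦋k⦌ i).op).app q σ,
      fun i => (W.map (SimplexCategory.mkOfSucc i).op).app q σ), by
    constructor <;> intro i
    · have e1 : SimplexCategory.δ 1 ≫ SimplexCategory.mkOfSucc i =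
          SimplexCategory.const ⦋0⦌ ⦋k⦌ i.castSucc := by
        ext x; fin_cases x; aesop
      have h : W.map (SimplexCategory.mkOfSucc i).op ≫ W.δ 1 =
          W.map (SimplexCategory.const ⦋0⦌ ⦋k⦌ i.castSucc).op := by
        dsimp [CategoryTheory.SimplicialObject.δ]
        rw [← W.map_comp, ← op_comp, e1]
      exact ConcreteCategory.congr_hom (NatTrans.congr_app h q) σ
    · have e0 : SimplexCategory.δ 0 ≫ SimplexCategory.mkOfSucc i =
          SimplexCategory.const ⦋0⦌ ⦋k⦌ i.succ := by
        ext x; fin_cases x; rfl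
      have h : W.map (SimplexCategory.mkOfSucc i).op ≫ W.δ 0 =
          W.map (SimplexCategory.const ⦋0⦌ ⦋k⦌ i.succ).op := by
        dsimp [CategoryTheory.SimplicialObject.δ]
        rw [← W.map_comp, ← op_comp, e0]
      exact ConcreteCategory.congr_hom (NatTrans.congr_app h q) σ⟩
  naturality q q' f := by
    apply ConcreteCategory.hom_ext; intro σ; apply Subtype.ext; dsimp [fiberProd]
    rw [Prod.ext_iff]
    constructor <;> funext i <;>
      exact ConcreteCategory.congr_hom ((W.map _).naturality f) σ

/-- A Segal space: a Reedy fibrant simplicial space whose Segal maps are weak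
homotopy equivalences. -/
structure SegalSpace where
  W : SSp
  reedy : ReedyFibrant W
  segal : ∀ k : ℕ, 2 ≤ k → SSet.IsWeakEquiv (segalMap W k)

namespace SegalSpace

variable (S : SegalSpace)

/-- The space of objects. -/
def Ob : Type := (S.W.obj (op ⦋0⦌)) _⦋0⦌

/-- The source (initial vertex) of a point of `W_1`. -/
def src (f : (S.W.obj (op ⦋1⦌)) _⦋0⦌) : S.Ob := (S.W.δ 1).app (op ⦋0⦌) f

/-- The target (final vertex) of a point of `W_1`. -/
def tgt (f : (S.W.obj (op ⦋1⦌)) _⦋0⦌) : S.Ob := (S.W.δ 0).app (op ⦋0⦌) f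

/-- The identity `id_x = s₀(x)`. -/
def ident (x : S.Ob) : (S.W.obj (op ⦋1⦌)) _⦋0⦌ := (S.W.σ 0).app (op ⦋0⦌) x

/-- Two points of `W_1` with boundary `(x, y)` are homotopic if they lie in the
same path component of the mapping space `map_W(x,y)`, the fiber of
`(d₁, d₀) : W_1 → W_0 × W_0` over `(x, y)`: here an elementary homotopy is an
edge of `W_1` lying entirely in that fiber. -/
def Htpy (x y : S.Ob) (f g : (S.W.obj (op ⦋1⦌)) _⦋0⦌) : Prop :=
  Relation.EqvGen (fun f g =>
    ∃ e : (S.W.obj (op ⦋1⦌)) _⦋1⦌,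
      (S.W.obj (op ⦋1⦌)).δ 1 e = f ∧ (S.W.obj (op ⦋1⦌)).δ 0 e = g ∧
      (S.W.δ 1).app (op ⦋1⦌) e = (S.W.obj (op ⦋0⦌)).σ 0 x ∧
      (S.W.δ 0).app (op ⦋1⦌) e = (S.W.obj (op ⦋0⦌)).σ 0 y) f g

/-- `h` is a composite of `f` and `g` (in this order: `h = g ∘ f`) if there is a
`2`-simplex (point of `W_2`) with outer faces `f` and `g` and diagonal `h`. -/
def IsComp (f g h : (S.W.obj (op ⦋1⦌)) _⦋0⦌) : Prop :=
  ∃ σ : (S.W.obj (op ⦋2⦌)) _⦋0⦌,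
    (S.W.δ 2).app (op ⦋0⦌) σ = f ∧ (S.W.δ 0).app (op ⦋0⦌) σ = g ∧
      (S.W.δ 1).app (op ⦋0⦌) σ = h

/-- `g ∈ map_W(x,y)₀` is a homotopy equivalence if there are `f, h ∈ map_W(y,x)₀`
with `g ∘ f ∼ id_y` and `h ∘ g ∼ id_x`. -/
def HoEquiv (x y : S.Ob) (g : (S.W.obj (op ⦋1⦌)) _⦋0⦌) : Prop :=
  (∃ f : (S.W.obj (op ⦋1⦌)) _⦋0⦌, S.src f = y ∧ S.tgt f = x ∧
    ∃ c, S.IsComp f g c ∧ S.Htpy y y c (S.ident y)) ∧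
  ∃ h : (S.W.obj (op ⦋1⦌)) _⦋0⦌, S.src h = y ∧ S.tgt h = x ∧
    ∃ c, S.IsComp g h c ∧ S.Htpy x x c (S.ident x)

end SegalSpace

namespace SegalSpace

open SimplexCategory CategoryTheory.Limits

variable (S : SegalSpace)

lemma wcomp {a b c : SimplexCategory} (f : a ⟶ b) (g : b ⟶ c) (q : SimplexCategoryᵒᵖ)
    (x : (S.W.obj (op c)).obj q) :
    (S.W.map f.op).app q ((S.W.map g.op).app q x) = (S.W.map (f ≫ g).op).app q x := by
  rw [op_comp, S.W.map_comp]; rfl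

lemma wnat {a b : SimplexCategory} (f : a ⟶ b) {q q' : SimplexCategoryᵒᵖ} (i : q ⟶ q')
    (x : (S.W.obj (op b)).obj q) :
    (S.W.map f.op).app q' ((S.W.obj (op b)).map i x)
      = (S.W.obj (op a)).map i ((S.W.map f.op).app q x) :=
  ConcreteCategory.congr_hom ((S.W.map f.op).naturality i) x

/-- Any endomorphism of `⦋0⦌` is the identity. -/
lemma to_zero_eq_id (f : (⦋0⦌ : SimplexCategory) ⟶ ⦋0⦌) : f = 𝟙 _ := by
  rw [eq_const_to_zero f, const_eq_id]

section Core

variable (k : Fin 2) (σ2 : (S.W.obj (op ⦋2⦌)) _⦋0⦌) (h : Fin 3 → (S.W.obj (op ⦋1⦌)) _⦋1⦌)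
  (vert : Fin 3 → (S.W.obj (op ⦋0⦌)) _⦋1⦌)

/-- The partial map `(∂Δ[2] □ Δ[1]) ∪ (Δ[2] □ Λ[1,k]) ⟶ W`, as a raw function on
pairs of morphisms. -/
noncomputable def Fval (p q : SimplexCategoryᵒᵖ) (α : p.unop ⟶ ⦋2⦌) (β : q.unop ⟶ ⦋1⦌) :
    (S.W.obj p).obj q :=
  if H : ∃ j : Fin 3, ∀ i, α.toOrderHom i ≠ j then
    (S.W.map (factor_δ (m := p.unop.len) (n := 1) α H.choose).op).app q
      ((S.W.obj (op ⦋1⦌)).map β.op (h H.choose))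
  else
    (S.W.obj p).map (SimplexCategory.const q.unop ⦋0⦌ 0).op ((S.W.map α.op).app (op ⦋0⦌) σ2)

lemma Fval_const_missed
    (hv : ∀ (j : Fin 3) (w : Fin 2),
      (S.W.map (SimplexCategory.const ⦋0⦌ ⦋1⦌ w).op).app (op ⦋1⦌) (h j)
        = vert ((SimplexCategory.δ j).toOrderHom w))
    (p q : SimplexCategoryᵒᵖ) (α : p.unop ⟶ ⦋2⦌) (β : q.unop ⟶ ⦋1⦌)
    (j : Fin 3) (hj : ∀ i, α.toOrderHom i ≠ j) (v : Fin 3) (hα : ∀ i, α.toOrderHom i = v) :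
    (S.W.map (factor_δ (m := p.unop.len) (n := 1) α j).op).app q
        ((S.W.obj (op ⦋1⦌)).map β.op (h j))
      = (S.W.map (SimplexCategory.const p.unop ⦋0⦌ 0).op).app q
          ((S.W.obj (op ⦋0⦌)).map β.op (vert v)) := by
  set w : Fin 2 := (SimplexCategory.σ (Fin.predAbove 0 j)).toOrderHom v with hw
  have hfac : factor_δ (m := p.unop.len) (n := 1) α j = SimplexCategory.const p.unop ⦋1⦌ w := by
    ext i : 3
    show (SimplexCategory.σ (Fin.predAbove 0 j)).toOrderHom (α.toOrderHom i) = w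
    rw [hα i]
  have hδw : (SimplexCategory.δ j).toOrderHom w = v := by
    have h2 : (SimplexCategory.δ j).toOrderHom
          ((factor_δ (m := p.unop.len) (n := 1) α j).toOrderHom ⟨0, Nat.succ_pos _⟩)
        = α.toOrderHom ⟨0, Nat.succ_pos _⟩ :=
      congrArg (fun f => Hom.toOrderHom f ⟨0, Nat.succ_pos _⟩)
        (factor_δ_spec (m := p.unop.len) (n := 1) α j hj)
    rw [hfac, hα] at h2
    exact h2
  rw [hfac, const_fac_thru_zero p.unop ⦋1⦌ w, op_comp, S.W.map_comp]
  show (S.W.map (SimplexCategory.const p.unop ⦋0⦌ 0).op).app q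
    ((S.W.map (SimplexCategory.const ⦋0⦌ ⦋1⦌ w).op).app q ((S.W.obj (op ⦋1⦌)).map β.op (h j))) = _
  rw [S.wnat (SimplexCategory.const ⦋0⦌ ⦋1⦌ w) β.op (h j), hv j w, hδw]
lemma Fval_missed
    (hv : ∀ (j : Fin 3) (w : Fin 2),
      (S.W.map (SimplexCategory.const ⦋0⦌ ⦋1⦌ w).op).app (op ⦋1⦌) (h j)
        = vert ((SimplexCategory.δ j).toOrderHom w))
    (p q : SimplexCategoryᵒᵖ) (α : p.unop ⟶ ⦋2⦌) (β : q.unop ⟶ ⦋1⦌)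
    (j : Fin 3) (hj : ∀ i, α.toOrderHom i ≠ j) :
    S.Fval σ2 h p q α β
      = (S.W.map (factor_δ (m := p.unop.len) (n := 1) α j).op).app q
          ((S.W.obj (op ⦋1⦌)).map β.op (h j)) := by
  have H : ∃ j : Fin 3, ∀ i, α.toOrderHom i ≠ j := ⟨j, hj⟩
  rw [Fval, dif_pos H]
  by_cases hjj : H.choose = j
  · rw [hjj]
  · have hj0 := H.choose_spec
    have hvv : ∀ i, α.toOrderHom i = α.toOrderHom ⟨0, Nat.succ_pos _⟩ := by
      intro i
      have a1 := hj i; have a2 := hj0 i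
      have a3 := hj ⟨0, Nat.succ_pos _⟩; have a4 := hj0 ⟨0, Nat.succ_pos _⟩
      have a5 : H.choose ≠ j := hjj
      have b1 := (α.toOrderHom i).isLt
      have b2 := (α.toOrderHom ⟨0, Nat.succ_pos _⟩).isLt
      simp only [Ne, Fin.ext_iff, SimplexCategory.len_mk] at a1 a2 a3 a4 a5 b1 b2 ⊢
      omega
    rw [S.Fval_const_missed h vert hv p q α β H.choose hj0 _ hvv,
      S.Fval_const_missed h vert hv p q α β j hj _ hvv]
lemma Fval_notmissed
    (hK : ∀ j : Fin 3, (S.W.obj (op ⦋1⦌)).map (SimplexCategory.const ⦋0⦌ ⦋1⦌ k).op (h j)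
      = (S.W.δ j).app (op ⦋0⦌) σ2)
    (hv : ∀ (j : Fin 3) (w : Fin 2),
      (S.W.map (SimplexCategory.const ⦋0⦌ ⦋1⦌ w).op).app (op ⦋1⦌) (h j)
        = vert ((SimplexCategory.δ j).toOrderHom w))
    (p q : SimplexCategoryᵒᵖ) (α : p.unop ⟶ ⦋2⦌)
    (j : Fin 3) (hj : ∀ i, α.toOrderHom i ≠ j) :
    S.Fval σ2 h p q α (SimplexCategory.const q.unop ⦋1⦌ k)
      = (S.W.obj p).map (SimplexCategory.const q.unop ⦋0⦌ 0).op
          ((S.W.map α.op).app (op ⦋0⦌) σ2) := by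
  rw [S.Fval_missed σ2 h vert hv p q α _ j hj]
  rw [const_fac_thru_zero q.unop ⦋1⦌ k, op_comp, FunctorToTypes.map_comp_apply, hK j]
  have hn := S.wnat (factor_δ (m := p.unop.len) (n := 1) α j)
    (SimplexCategory.const q.unop ⦋0⦌ 0).op ((S.W.δ j).app (op ⦋0⦌) σ2)
  rw [hn]
  rw [show (S.W.δ j).app (op ⦋0⦌) σ2 = (S.W.map (SimplexCategory.δ j).op).app (op ⦋0⦌) σ2 from rfl,
    S.wcomp, factor_δ_spec (m := p.unop.len) (n := 1) α j hj]
lemma Fval_inner_nat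
    (hv : ∀ (j : Fin 3) (w : Fin 2),
      (S.W.map (SimplexCategory.const ⦋0⦌ ⦋1⦌ w).op).app (op ⦋1⦌) (h j)
        = vert ((SimplexCategory.δ j).toOrderHom w))
    (p : SimplexCategoryᵒᵖ) {q q' : SimplexCategoryᵒᵖ} (i : q ⟶ q')
    (α : p.unop ⟶ ⦋2⦌) (β : q.unop ⟶ ⦋1⦌) :
    S.Fval σ2 h p q' α (i.unop ≫ β) = (S.W.obj p).map i (S.Fval σ2 h p q α β) := by
  by_cases H : ∃ j : Fin 3, ∀ i, α.toOrderHom i ≠ j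
  · obtain ⟨j, hj⟩ := H
    rw [S.Fval_missed σ2 h vert hv p q' α _ j hj, S.Fval_missed σ2 h vert hv p q α β j hj]
    have e1 : (i.unop ≫ β).op = β.op ≫ i := rfl
    rw [e1, FunctorToTypes.map_comp_apply]
    exact S.wnat _ i _
  · rw [Fval, dif_neg H, Fval, dif_neg H]
    rw [← FunctorToTypes.map_comp_apply]
    have e2 : (SimplexCategory.const q.unop ⦋0⦌ 0).op ≫ i
        = (SimplexCategory.const q'.unop ⦋0⦌ 0).op := by
      rw [show (SimplexCategory.const q'.unop ⦋0⦌ 0)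
          = i.unop ≫ SimplexCategory.const q.unop ⦋0⦌ 0 from (eq_const_to_zero _).symm]
      rfl
    rw [e2]

lemma Fval_outer_nat
    (hK : ∀ j : Fin 3, (S.W.obj (op ⦋1⦌)).map (SimplexCategory.const ⦋0⦌ ⦋1⦌ k).op (h j)
      = (S.W.δ j).app (op ⦋0⦌) σ2)
    (hv : ∀ (j : Fin 3) (w : Fin 2),
      (S.W.map (SimplexCategory.const ⦋0⦌ ⦋1⦌ w).op).app (op ⦋1⦌) (h j)
        = vert ((SimplexCategory.δ j).toOrderHom w))
    {p p' : SimplexCategoryᵒᵖ} (f : p ⟶ p') (q : SimplexCategoryᵒᵖ)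
    (α : p.unop ⟶ ⦋2⦌) (β : q.unop ⟶ ⦋1⦌)
    (hx : (∃ j : Fin 3, ∀ i, α.toOrderHom i ≠ j) ∨ β = SimplexCategory.const q.unop ⦋1⦌ k) :
    S.Fval σ2 h p' q (f.unop ≫ α) β = (S.W.map f).app q (S.Fval σ2 h p q α β) := by
  by_cases H : ∃ j : Fin 3, ∀ i, α.toOrderHom i ≠ j
  · obtain ⟨j, hj⟩ := H
    have hj' : ∀ i, (f.unop ≫ α).toOrderHom i ≠ j := fun i => hj _
    rw [S.Fval_missed σ2 h vert hv p' q _ β j hj', S.Fval_missed σ2 h vert hv p q α β j hj]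
    have hfac : factor_δ (m := p'.unop.len) (n := 1) (f.unop ≫ α) j
        = f.unop ≫ factor_δ (m := p.unop.len) (n := 1) α j := by
      show (f.unop ≫ α) ≫ SimplexCategory.σ (Fin.predAbove 0 j)
        = f.unop ≫ (α ≫ SimplexCategory.σ (Fin.predAbove 0 j))
      rw [CategoryTheory.Category.assoc]
    rw [hfac, ← S.wcomp f.unop (factor_δ (m := p.unop.len) (n := 1) α j) q]
    rfl
  · have hβ : β = SimplexCategory.const q.unop ⦋1⦌ k := hx.resolve_left H
    subst hβ
    have hL : S.Fval σ2 h p' q (f.unop ≫ α) (SimplexCategory.const q.unop ⦋1⦌ k)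
        = (S.W.obj p').map (SimplexCategory.const q.unop ⦋0⦌ 0).op
            ((S.W.map (f.unop ≫ α).op).app (op ⦋0⦌) σ2) := by
      by_cases H' : ∃ j : Fin 3, ∀ i, (f.unop ≫ α).toOrderHom i ≠ j
      · obtain ⟨j, hj⟩ := H'
        exact S.Fval_notmissed k σ2 h vert hK hv p' q _ j hj
      · rw [Fval, dif_neg H']
    rw [hL, Fval, dif_neg H]
    have hn := S.wnat f.unop (SimplexCategory.const q.unop ⦋0⦌ 0).op
      ((S.W.map α.op).app (op ⦋0⦌) σ2)
    rw [show (S.W.map f).app q ((S.W.obj p).map (SimplexCategory.const q.unop ⦋0⦌ 0).op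
          ((S.W.map α.op).app (op ⦋0⦌) σ2))
        = (S.W.map f.unop.op).app q ((S.W.obj (op p.unop)).map
          (SimplexCategory.const q.unop ⦋0⦌ 0).op ((S.W.map α.op).app (op ⦋0⦌) σ2)) from rfl,
      hn, S.wcomp]
lemma cond_convert {p q : SimplexCategoryᵒᵖ} (x : (bhSet 2 1 k p).obj q) :
    (∃ j : Fin 3, ∀ i, (x.1.1.down).toOrderHom i ≠ j)
      ∨ x.1.2.down = SimplexCategory.const q.unop ⦋1⦌ k := by
  refine x.2.imp ?_ ?_
  · intro hns
    rw [Function.Surjective] at hns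
    push_neg at hns
    exact hns
  · intro hr
    have hnr : ∃ v : Fin 2, v ∉ Set.range (SSet.stdSimplex.asOrderHom x.1.2) ∧ v ≠ k := by
      by_contra hc
      push_neg at hc
      apply hr
      rw [Set.eq_univ_iff_forall]
      intro v
      by_cases hm : v ∈ Set.range (SSet.stdSimplex.asOrderHom x.1.2)
      · exact Set.mem_union_left _ hm
      · exact Set.mem_union_right _ (by simp [hc v hm])
    obtain ⟨v, hv, hvk⟩ := hnr
    apply SimplexCategory.Hom.ext
    apply OrderHom.ext
    funext i
    show x.1.2.down.toOrderHom i = k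
    have h1 : x.1.2.down.toOrderHom i ≠ v := fun he => hv ⟨i, he⟩
    have b1 := (x.1.2.down.toOrderHom i).isLt
    simp only [Ne, Fin.ext_iff, SimplexCategory.len_mk] at h1 hvk b1 ⊢
    have b2 := v.isLt
    have b3 := k.isLt
    omega

/-- The map `(∂Δ[2] □ Δ[1]) ∪ (Δ[2] □ Λ[1,k]) ⟶ W` assembled from the data. -/
noncomputable def uMap
    (hK : ∀ j : Fin 3, (S.W.obj (op ⦋1⦌)).map (SimplexCategory.const ⦋0⦌ ⦋1⦌ k).op (h j)
      = (S.W.δ j).app (op ⦋0⦌) σ2)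
    (hv : ∀ (j : Fin 3) (w : Fin 2),
      (S.W.map (SimplexCategory.const ⦋0⦌ ⦋1⦌ w).op).app (op ⦋1⦌) (h j)
        = vert ((SimplexCategory.δ j).toOrderHom w)) :
    bhObj 2 1 k ⟶ S.W where
  app p :=
    { app := fun q => TypeCat.ofHom fun x => S.Fval σ2 h p q x.1.1.down x.1.2.down
      naturality := fun q q' i => by
        ext x
        exact S.Fval_inner_nat σ2 h vert hv p i x.1.1.down x.1.2.down }
  naturality := fun p p' f => by
    apply NatTrans.ext
    funext q; ext x
    exact S.Fval_outer_nat k σ2 h vert hK hv f q x.1.1.down x.1.2.down (cond_convert k x)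
lemma prism
    (hK : ∀ j : Fin 3, (S.W.obj (op ⦋1⦌)).map (SimplexCategory.const ⦋0⦌ ⦋1⦌ k).op (h j)
      = (S.W.δ j).app (op ⦋0⦌) σ2)
    (hv : ∀ (j : Fin 3) (w : Fin 2),
      (S.W.map (SimplexCategory.const ⦋0⦌ ⦋1⦌ w).op).app (op ⦋1⦌) (h j)
        = vert ((SimplexCategory.δ j).toOrderHom w)) :
    ∃ τ : (S.W.obj (op ⦋2⦌)) _⦋1⦌, ∀ j : Fin 3, (S.W.δ j).app (op ⦋1⦌) τ = h j := by
  have hlp := S.reedy 2 0 k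
  have sq : CommSq (S.uMap k σ2 h vert hK hv) (bhIncl 2 1 k)
      (terminal.from S.W) (terminal.from (extProd Δ[2] Δ[1])) :=
    ⟨Subsingleton.elim _ _⟩
  set z : (Δ[2].obj (op ⦋2⦌)) × (Δ[1].obj (op ⦋1⦌)) :=
    (ULift.up (𝟙 (⦋2⦌ : SimplexCategory)), ULift.up (𝟙 (⦋1⦌ : SimplexCategory))) with hz
  refine ⟨((sq.lift.app (op ⦋2⦌)).app (op ⦋1⦌)) z, fun j => ?_⟩
  have hj : ∀ i, (SimplexCategory.δ j ≫ 𝟙 (⦋2⦌ : SimplexCategory)).toOrderHom i ≠ j := by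
    intro i
    rw [CategoryTheory.Category.comp_id]
    exact fun hi => Fin.succAbove_ne j i hi
  have mem : ¬Function.Surjective
        (SSet.stdSimplex.asOrderHom (ULift.up (SimplexCategory.δ j ≫ 𝟙 (⦋2⦌ : SimplexCategory))
          : Δ[2].obj (op ⦋1⦌)))
      ∨ Set.range (SSet.stdSimplex.asOrderHom (ULift.up (𝟙 (⦋1⦌ : SimplexCategory)) : Δ[1].obj (op ⦋1⦌)))
          ∪ {k} ≠ Set.univ := by
    left
    intro hs
    obtain ⟨i, hi⟩ := hs j
    exact hj i hi
  have hnat : (sq.lift.app (op ⦋1⦌)).app (op ⦋1⦌)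
        ((pasteMap (Δ[2].map (SimplexCategory.δ j).op) Δ[1]).app (op ⦋1⦌) z)
      = (S.W.map (SimplexCategory.δ j).op).app (op ⦋1⦌)
          (((sq.lift.app (op ⦋2⦌)).app (op ⦋1⦌)) z) :=
    ConcreteCategory.congr_hom (NatTrans.congr_app (sq.lift.naturality (SimplexCategory.δ j).op) (op ⦋1⦌)) z
  have hfac : (sq.lift.app (op ⦋1⦌)).app (op ⦋1⦌)
        ((ULift.up (SimplexCategory.δ j ≫ 𝟙 (⦋2⦌ : SimplexCategory)),
          ULift.up (𝟙 (⦋1⦌ : SimplexCategory))))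
      = S.Fval σ2 h (op ⦋1⦌) (op ⦋1⦌) (SimplexCategory.δ j ≫ 𝟙 (⦋2⦌ : SimplexCategory))
          (𝟙 (⦋1⦌ : SimplexCategory)) :=
    ConcreteCategory.congr_hom (NatTrans.congr_app (NatTrans.congr_app sq.fac_left (op ⦋1⦌)) (op ⦋1⦌))
      ⟨(ULift.up (SimplexCategory.δ j ≫ 𝟙 _), ULift.up (𝟙 _)), mem⟩
  have hstep : (S.W.δ j).app (op ⦋1⦌) (((sq.lift.app (op ⦋2⦌)).app (op ⦋1⦌)) z)
      = S.Fval σ2 h (op ⦋1⦌) (op ⦋1⦌) (SimplexCategory.δ j ≫ 𝟙 (⦋2⦌ : SimplexCategory))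
          (𝟙 (⦋1⦌ : SimplexCategory)) := by
    rw [show (S.W.δ j).app (op ⦋1⦌) (((sq.lift.app (op ⦋2⦌)).app (op ⦋1⦌)) z)
        = (S.W.map (SimplexCategory.δ j).op).app (op ⦋1⦌)
            (((sq.lift.app (op ⦋2⦌)).app (op ⦋1⦌)) z) from rfl, ← hnat]
    exact hfac
  rw [hstep, S.Fval_missed σ2 h vert hv (op ⦋1⦌) (op ⦋1⦌) _ _ j hj]
  have hone : factor_δ (m := 1) (n := 1) (SimplexCategory.δ j ≫ 𝟙 (⦋2⦌ : SimplexCategory)) j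
      = 𝟙 (⦋1⦌ : SimplexCategory) := by
    refine (cancel_mono (SimplexCategory.δ j)).mp ?_
    rw [CategoryTheory.Category.id_comp,
      factor_δ_spec (m := 1) (n := 1) (SimplexCategory.δ j ≫ 𝟙 (⦋2⦌ : SimplexCategory)) j hj,
      CategoryTheory.Category.comp_id]
  rw [hone]
  rw [show ((𝟙 (⦋1⦌ : SimplexCategory)).op) = 𝟙 (op (⦋1⦌ : SimplexCategory)) from rfl,
    S.W.map_id, (S.W.obj (op ⦋1⦌)).map_id]
  rfl
end Core

/-- Constant edge at a vertex of a simplicial set collapses back. -/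
lemma ivert_sigma (X : SSet.{0}) (w : Fin 2) (a : X _⦋0⦌) :
    X.map (SimplexCategory.const ⦋0⦌ ⦋1⦌ w).op (X.σ 0 a) = a := by
  rw [show X.σ 0 a = X.map (SimplexCategory.σ (0 : Fin 1)).op a from rfl,
    ← FunctorToTypes.map_comp_apply,
    show (SimplexCategory.σ (0 : Fin 1)).op ≫ (SimplexCategory.const ⦋0⦌ ⦋1⦌ w).op
      = (SimplexCategory.const ⦋0⦌ ⦋1⦌ w ≫ SimplexCategory.σ 0).op from rfl,
    to_zero_eq_id (SimplexCategory.const ⦋0⦌ ⦋1⦌ w ≫ SimplexCategory.σ 0)]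
  exact FunctorToTypes.map_id_apply X _

lemma delta_one_eq : (SimplexCategory.δ (1 : Fin 2)) = SimplexCategory.const ⦋0⦌ ⦋1⦌ 0 :=
  SimplexCategory.Hom.ext_zero_left _ _

lemma delta_zero_eq : (SimplexCategory.δ (0 : Fin 2)) = SimplexCategory.const ⦋0⦌ ⦋1⦌ 1 :=
  SimplexCategory.Hom.ext_zero_left _ _

/-- Outer vertex `0` of a point of `W₁` is its source. -/
lemma map_c0_eq_src (a : (S.W.obj (op ⦋1⦌)) _⦋0⦌) :
    (S.W.map (SimplexCategory.const ⦋0⦌ ⦋1⦌ (0 : Fin 2)).op).app (op ⦋0⦌) a = S.src a := by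
  rw [← delta_one_eq]; rfl

lemma map_c1_eq_tgt (a : (S.W.obj (op ⦋1⦌)) _⦋0⦌) :
    (S.W.map (SimplexCategory.const ⦋0⦌ ⦋1⦌ (1 : Fin 2)).op).app (op ⦋0⦌) a = S.tgt a := by
  rw [← delta_zero_eq]; rfl

/-- Outer vertex maps commute with the constant-homotopy construction. -/
lemma map_vert_sigma (w : Fin 2) (a : (S.W.obj (op ⦋1⦌)) _⦋0⦌) :
    (S.W.map (SimplexCategory.const ⦋0⦌ ⦋1⦌ w).op).app (op ⦋1⦌) ((S.W.obj (op ⦋1⦌)).σ 0 a)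
      = (S.W.obj (op ⦋0⦌)).σ 0
          ((S.W.map (SimplexCategory.const ⦋0⦌ ⦋1⦌ w).op).app (op ⦋0⦌) a) :=
  S.wnat (SimplexCategory.const ⦋0⦌ ⦋1⦌ w) ((SimplexCategory.σ (0 : Fin 1)).op) a

/-- Outer vertex maps commute with inner vertex evaluation. -/
lemma map_vert_ivert (w kk : Fin 2) (e : (S.W.obj (op ⦋1⦌)) _⦋1⦌) :
    (S.W.map (SimplexCategory.const ⦋0⦌ ⦋1⦌ w).op).app (op ⦋0⦌)
        ((S.W.obj (op ⦋1⦌)).map (SimplexCategory.const ⦋0⦌ ⦋1⦌ kk).op e)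
      = (S.W.obj (op ⦋0⦌)).map (SimplexCategory.const ⦋0⦌ ⦋1⦌ kk).op
          ((S.W.map (SimplexCategory.const ⦋0⦌ ⦋1⦌ w).op).app (op ⦋1⦌) e) :=
  S.wnat (SimplexCategory.const ⦋0⦌ ⦋1⦌ w) ((SimplexCategory.const ⦋0⦌ ⦋1⦌ kk).op) e

/-- Sources and targets of the faces of a `2`-simplex. -/
lemma src_d1_eq_src_d2 (σc : (S.W.obj (op ⦋2⦌)) _⦋0⦌) :
    S.src ((S.W.δ 1).app (op ⦋0⦌) σc) = S.src ((S.W.δ 2).app (op ⦋0⦌) σc) := by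
  show (S.W.map (SimplexCategory.δ (1 : Fin 2)).op).app (op ⦋0⦌)
      ((S.W.map (SimplexCategory.δ (1 : Fin 3)).op).app (op ⦋0⦌) σc)
    = (S.W.map (SimplexCategory.δ (1 : Fin 2)).op).app (op ⦋0⦌)
      ((S.W.map (SimplexCategory.δ (2 : Fin 3)).op).app (op ⦋0⦌) σc)
  rw [S.wcomp, S.wcomp, SimplexCategory.Hom.ext_zero_left
    (SimplexCategory.δ (1 : Fin 2) ≫ SimplexCategory.δ (1 : Fin 3))
    (SimplexCategory.δ (1 : Fin 2) ≫ SimplexCategory.δ (2 : Fin 3))]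

lemma tgt_d1_eq_tgt_d0 (σc : (S.W.obj (op ⦋2⦌)) _⦋0⦌) :
    S.tgt ((S.W.δ 1).app (op ⦋0⦌) σc) = S.tgt ((S.W.δ 0).app (op ⦋0⦌) σc) := by
  show (S.W.map (SimplexCategory.δ (0 : Fin 2)).op).app (op ⦋0⦌)
      ((S.W.map (SimplexCategory.δ (1 : Fin 3)).op).app (op ⦋0⦌) σc)
    = (S.W.map (SimplexCategory.δ (0 : Fin 2)).op).app (op ⦋0⦌)
      ((S.W.map (SimplexCategory.δ (0 : Fin 3)).op).app (op ⦋0⦌) σc)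
  rw [S.wcomp, S.wcomp, SimplexCategory.Hom.ext_zero_left
    (SimplexCategory.δ (0 : Fin 2) ≫ SimplexCategory.δ (1 : Fin 3))
    (SimplexCategory.δ (0 : Fin 2) ≫ SimplexCategory.δ (0 : Fin 3))]
/-- Transport of a composition witness along an elementary homotopy of `g`
(sitting at inner vertex `k` of the homotopy `e`). -/
lemma transport (x y : S.Ob) (k : Fin 2) {g g' : (S.W.obj (op ⦋1⦌)) _⦋0⦌}
    (e : (S.W.obj (op ⦋1⦌)) _⦋1⦌)
    (hek : (S.W.obj (op ⦋1⦌)).map (SimplexCategory.const ⦋0⦌ ⦋1⦌ k).op e = g)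
    (hek' : (S.W.obj (op ⦋1⦌)).map (SimplexCategory.const ⦋0⦌ ⦋1⦌ ((k + 1 : Fin 2))).op e = g')
    (hs : (S.W.δ 1).app (op ⦋1⦌) e = (S.W.obj (op ⦋0⦌)).σ 0 x)
    (ht : (S.W.δ 0).app (op ⦋1⦌) e = (S.W.obj (op ⦋0⦌)).σ 0 y)
    (f c : (S.W.obj (op ⦋1⦌)) _⦋0⦌) (hfs : S.src f = y) (hft : S.tgt f = x)
    (hcomp : S.IsComp f g c) : S.IsComp f g' c := by
  obtain ⟨σc, hσ2, hσ0, hσ1⟩ := hcomp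
  -- boundary facts
  have htg : S.tgt g = y := by
    rw [← hek,
      show S.tgt ((S.W.obj (op ⦋1⦌)).map (SimplexCategory.const ⦋0⦌ ⦋1⦌ k).op e)
        = (S.W.map (SimplexCategory.δ (0 : Fin 2)).op).app (op ⦋0⦌)
            ((S.W.obj (op ⦋1⦌)).map (SimplexCategory.const ⦋0⦌ ⦋1⦌ k).op e) from rfl,
      S.wnat (SimplexCategory.δ (0 : Fin 2)) ((SimplexCategory.const ⦋0⦌ ⦋1⦌ k).op) e,
      show (S.W.map (SimplexCategory.δ (0 : Fin 2)).op).app (op ⦋1⦌) e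
        = (S.W.δ 0).app (op ⦋1⦌) e from rfl, ht]
    exact ivert_sigma _ k y
  have hsc : S.src c = y := by
    rw [← hσ1, S.src_d1_eq_src_d2 σc, hσ2, hfs]
  have htc : S.tgt c = y := by
    rw [← hσ1, S.tgt_d1_eq_tgt_d0 σc, hσ0, htg]
  -- the homotopies on the three faces
  set h : Fin 3 → (S.W.obj (op ⦋1⦌)) _⦋1⦌ :=
    ![e, (S.W.obj (op ⦋1⦌)).σ 0 c, (S.W.obj (op ⦋1⦌)).σ 0 f] with hh
  set vert : Fin 3 → (S.W.obj (op ⦋0⦌)) _⦋1⦌ :=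
    ![(S.W.obj (op ⦋0⦌)).σ 0 y, (S.W.obj (op ⦋0⦌)).σ 0 x, (S.W.obj (op ⦋0⦌)).σ 0 y] with hvert
  have hK : ∀ j : Fin 3, (S.W.obj (op ⦋1⦌)).map (SimplexCategory.const ⦋0⦌ ⦋1⦌ k).op (h j)
      = (S.W.δ j).app (op ⦋0⦌) σc := by
    intro j
    fin_cases j
    · show (S.W.obj (op ⦋1⦌)).map (SimplexCategory.const ⦋0⦌ ⦋1⦌ k).op e
        = (S.W.δ 0).app (op ⦋0⦌) σc
      rw [hek, hσ0]
    · show (S.W.obj (op ⦋1⦌)).map (SimplexCategory.const ⦋0⦌ ⦋1⦌ k).op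
          ((S.W.obj (op ⦋1⦌)).σ 0 c) = (S.W.δ 1).app (op ⦋0⦌) σc
      rw [ivert_sigma _ k c, hσ1]
    · show (S.W.obj (op ⦋1⦌)).map (SimplexCategory.const ⦋0⦌ ⦋1⦌ k).op
          ((S.W.obj (op ⦋1⦌)).σ 0 f) = (S.W.δ 2).app (op ⦋0⦌) σc
      rw [ivert_sigma _ k f, hσ2]
  have hv : ∀ (j : Fin 3) (w : Fin 2),
      (S.W.map (SimplexCategory.const ⦋0⦌ ⦋1⦌ w).op).app (op ⦋1⦌) (h j)
        = vert ((SimplexCategory.δ j).toOrderHom w) := by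
    intro j w
    fin_cases j <;> fin_cases w
    · show (S.W.map (SimplexCategory.const ⦋0⦌ ⦋1⦌ (0 : Fin 2)).op).app (op ⦋1⦌) e = vert 1
      rw [← delta_one_eq]
      exact hs
    · show (S.W.map (SimplexCategory.const ⦋0⦌ ⦋1⦌ (1 : Fin 2)).op).app (op ⦋1⦌) e = vert 2
      rw [← delta_zero_eq]
      exact ht
    · show (S.W.map (SimplexCategory.const ⦋0⦌ ⦋1⦌ (0 : Fin 2)).op).app (op ⦋1⦌)
          ((S.W.obj (op ⦋1⦌)).σ 0 c) = vert 0
      rw [S.map_vert_sigma 0 c, S.map_c0_eq_src c, hsc]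
      rfl
    · show (S.W.map (SimplexCategory.const ⦋0⦌ ⦋1⦌ (1 : Fin 2)).op).app (op ⦋1⦌)
          ((S.W.obj (op ⦋1⦌)).σ 0 c) = vert 2
      rw [S.map_vert_sigma 1 c, S.map_c1_eq_tgt c, htc]
      rfl
    · show (S.W.map (SimplexCategory.const ⦋0⦌ ⦋1⦌ (0 : Fin 2)).op).app (op ⦋1⦌)
          ((S.W.obj (op ⦋1⦌)).σ 0 f) = vert 0
      rw [S.map_vert_sigma 0 f, S.map_c0_eq_src f, hfs]
      rfl
    · show (S.W.map (SimplexCategory.const ⦋0⦌ ⦋1⦌ (1 : Fin 2)).op).app (op ⦋1⦌)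
          ((S.W.obj (op ⦋1⦌)).σ 0 f) = vert 1
      rw [S.map_vert_sigma 1 f, S.map_c1_eq_tgt f, hft]
      rfl
  obtain ⟨τ, hτ⟩ := S.prism k σc h vert hK hv
  refine ⟨(S.W.obj (op ⦋2⦌)).map (SimplexCategory.const ⦋0⦌ ⦋1⦌ ((k + 1 : Fin 2))).op τ, ?_, ?_, ?_⟩
  · rw [show (S.W.δ 2).app (op ⦋0⦌)
          ((S.W.obj (op ⦋2⦌)).map (SimplexCategory.const ⦋0⦌ ⦋1⦌ ((k + 1 : Fin 2))).op τ)
        = (S.W.map (SimplexCategory.δ (2 : Fin 3)).op).app (op ⦋0⦌)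
          ((S.W.obj (op ⦋2⦌)).map (SimplexCategory.const ⦋0⦌ ⦋1⦌ ((k + 1 : Fin 2))).op τ) from rfl,
      S.wnat (SimplexCategory.δ (2 : Fin 3)) ((SimplexCategory.const ⦋0⦌ ⦋1⦌ ((k + 1 : Fin 2))).op) τ,
      show (S.W.map (SimplexCategory.δ (2 : Fin 3)).op).app (op ⦋1⦌) τ
        = (S.W.δ 2).app (op ⦋1⦌) τ from rfl, hτ 2]
    exact ivert_sigma _ ((k + 1 : Fin 2)) f
  · rw [show (S.W.δ 0).app (op ⦋0⦌)
          ((S.W.obj (op ⦋2⦌)).map (SimplexCategory.const ⦋0⦌ ⦋1⦌ ((k + 1 : Fin 2))).op τ)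
        = (S.W.map (SimplexCategory.δ (0 : Fin 3)).op).app (op ⦋0⦌)
          ((S.W.obj (op ⦋2⦌)).map (SimplexCategory.const ⦋0⦌ ⦋1⦌ ((k + 1 : Fin 2))).op τ) from rfl,
      S.wnat (SimplexCategory.δ (0 : Fin 3)) ((SimplexCategory.const ⦋0⦌ ⦋1⦌ ((k + 1 : Fin 2))).op) τ,
      show (S.W.map (SimplexCategory.δ (0 : Fin 3)).op).app (op ⦋1⦌) τ
        = (S.W.δ 0).app (op ⦋1⦌) τ from rfl, hτ 0]
    exact hek'
  · rw [show (S.W.δ 1).app (op ⦋0⦌)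
          ((S.W.obj (op ⦋2⦌)).map (SimplexCategory.const ⦋0⦌ ⦋1⦌ ((k + 1 : Fin 2))).op τ)
        = (S.W.map (SimplexCategory.δ (1 : Fin 3)).op).app (op ⦋0⦌)
          ((S.W.obj (op ⦋2⦌)).map (SimplexCategory.const ⦋0⦌ ⦋1⦌ ((k + 1 : Fin 2))).op τ) from rfl,
      S.wnat (SimplexCategory.δ (1 : Fin 3)) ((SimplexCategory.const ⦋0⦌ ⦋1⦌ ((k + 1 : Fin 2))).op) τ,
      show (S.W.map (SimplexCategory.δ (1 : Fin 3)).op).app (op ⦋1⦌) τ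
        = (S.W.δ 1).app (op ⦋1⦌) τ from rfl, hτ 1]
    exact ivert_sigma _ ((k + 1 : Fin 2)) c
/-- Transport of a composition witness (on the other side) along an elementary
homotopy of `g`. -/
lemma transport2 (x y : S.Ob) (k : Fin 2) {g g' : (S.W.obj (op ⦋1⦌)) _⦋0⦌}
    (e : (S.W.obj (op ⦋1⦌)) _⦋1⦌)
    (hek : (S.W.obj (op ⦋1⦌)).map (SimplexCategory.const ⦋0⦌ ⦋1⦌ k).op e = g)
    (hek' : (S.W.obj (op ⦋1⦌)).map (SimplexCategory.const ⦋0⦌ ⦋1⦌ ((k + 1 : Fin 2))).op e = g')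
    (hs : (S.W.δ 1).app (op ⦋1⦌) e = (S.W.obj (op ⦋0⦌)).σ 0 x)
    (ht : (S.W.δ 0).app (op ⦋1⦌) e = (S.W.obj (op ⦋0⦌)).σ 0 y)
    (hh2 c : (S.W.obj (op ⦋1⦌)) _⦋0⦌) (hhs : S.src hh2 = y) (hht : S.tgt hh2 = x)
    (hcomp : S.IsComp g hh2 c) : S.IsComp g' hh2 c := by
  obtain ⟨σc, hσ2, hσ0, hσ1⟩ := hcomp
  have hsg : S.src g = x := by
    rw [← hek,
      show S.src ((S.W.obj (op ⦋1⦌)).map (SimplexCategory.const ⦋0⦌ ⦋1⦌ k).op e)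
        = (S.W.map (SimplexCategory.δ (1 : Fin 2)).op).app (op ⦋0⦌)
            ((S.W.obj (op ⦋1⦌)).map (SimplexCategory.const ⦋0⦌ ⦋1⦌ k).op e) from rfl,
      S.wnat (SimplexCategory.δ (1 : Fin 2)) ((SimplexCategory.const ⦋0⦌ ⦋1⦌ k).op) e,
      show (S.W.map (SimplexCategory.δ (1 : Fin 2)).op).app (op ⦋1⦌) e
        = (S.W.δ 1).app (op ⦋1⦌) e from rfl, hs]
    exact ivert_sigma _ k x
  have hsc : S.src c = x := by
    rw [← hσ1, S.src_d1_eq_src_d2 σc, hσ2, hsg]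
  have htc : S.tgt c = x := by
    rw [← hσ1, S.tgt_d1_eq_tgt_d0 σc, hσ0, hht]
  set h : Fin 3 → (S.W.obj (op ⦋1⦌)) _⦋1⦌ :=
    ![(S.W.obj (op ⦋1⦌)).σ 0 hh2, (S.W.obj (op ⦋1⦌)).σ 0 c, e] with hhdef
  set vert : Fin 3 → (S.W.obj (op ⦋0⦌)) _⦋1⦌ :=
    ![(S.W.obj (op ⦋0⦌)).σ 0 x, (S.W.obj (op ⦋0⦌)).σ 0 y, (S.W.obj (op ⦋0⦌)).σ 0 x] with hvert
  have hK : ∀ j : Fin 3, (S.W.obj (op ⦋1⦌)).map (SimplexCategory.const ⦋0⦌ ⦋1⦌ k).op (h j)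
      = (S.W.δ j).app (op ⦋0⦌) σc := by
    intro j
    fin_cases j
    · show (S.W.obj (op ⦋1⦌)).map (SimplexCategory.const ⦋0⦌ ⦋1⦌ k).op
          ((S.W.obj (op ⦋1⦌)).σ 0 hh2) = (S.W.δ 0).app (op ⦋0⦌) σc
      rw [ivert_sigma _ k hh2, hσ0]
    · show (S.W.obj (op ⦋1⦌)).map (SimplexCategory.const ⦋0⦌ ⦋1⦌ k).op
          ((S.W.obj (op ⦋1⦌)).σ 0 c) = (S.W.δ 1).app (op ⦋0⦌) σc
      rw [ivert_sigma _ k c, hσ1]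
    · show (S.W.obj (op ⦋1⦌)).map (SimplexCategory.const ⦋0⦌ ⦋1⦌ k).op e
        = (S.W.δ 2).app (op ⦋0⦌) σc
      rw [hek, hσ2]
  have hv : ∀ (j : Fin 3) (w : Fin 2),
      (S.W.map (SimplexCategory.const ⦋0⦌ ⦋1⦌ w).op).app (op ⦋1⦌) (h j)
        = vert ((SimplexCategory.δ j).toOrderHom w) := by
    intro j w
    fin_cases j <;> fin_cases w
    · show (S.W.map (SimplexCategory.const ⦋0⦌ ⦋1⦌ (0 : Fin 2)).op).app (op ⦋1⦌)
          ((S.W.obj (op ⦋1⦌)).σ 0 hh2) = vert 1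
      rw [S.map_vert_sigma 0 hh2, S.map_c0_eq_src hh2, hhs]
      rfl
    · show (S.W.map (SimplexCategory.const ⦋0⦌ ⦋1⦌ (1 : Fin 2)).op).app (op ⦋1⦌)
          ((S.W.obj (op ⦋1⦌)).σ 0 hh2) = vert 2
      rw [S.map_vert_sigma 1 hh2, S.map_c1_eq_tgt hh2, hht]
      rfl
    · show (S.W.map (SimplexCategory.const ⦋0⦌ ⦋1⦌ (0 : Fin 2)).op).app (op ⦋1⦌)
          ((S.W.obj (op ⦋1⦌)).σ 0 c) = vert 0
      rw [S.map_vert_sigma 0 c, S.map_c0_eq_src c, hsc]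
      rfl
    · show (S.W.map (SimplexCategory.const ⦋0⦌ ⦋1⦌ (1 : Fin 2)).op).app (op ⦋1⦌)
          ((S.W.obj (op ⦋1⦌)).σ 0 c) = vert 2
      rw [S.map_vert_sigma 1 c, S.map_c1_eq_tgt c, htc]
      rfl
    · show (S.W.map (SimplexCategory.const ⦋0⦌ ⦋1⦌ (0 : Fin 2)).op).app (op ⦋1⦌) e = vert 0
      rw [← delta_one_eq]
      exact hs
    · show (S.W.map (SimplexCategory.const ⦋0⦌ ⦋1⦌ (1 : Fin 2)).op).app (op ⦋1⦌) e = vert 1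
      rw [← delta_zero_eq]
      exact ht
  obtain ⟨τ, hτ⟩ := S.prism k σc h vert hK hv
  refine ⟨(S.W.obj (op ⦋2⦌)).map (SimplexCategory.const ⦋0⦌ ⦋1⦌ ((k + 1 : Fin 2))).op τ, ?_, ?_, ?_⟩
  · rw [show (S.W.δ 2).app (op ⦋0⦌)
          ((S.W.obj (op ⦋2⦌)).map (SimplexCategory.const ⦋0⦌ ⦋1⦌ ((k + 1 : Fin 2))).op τ)
        = (S.W.map (SimplexCategory.δ (2 : Fin 3)).op).app (op ⦋0⦌)
          ((S.W.obj (op ⦋2⦌)).map (SimplexCategory.const ⦋0⦌ ⦋1⦌ ((k + 1 : Fin 2))).op τ) from rfl,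
      S.wnat (SimplexCategory.δ (2 : Fin 3)) ((SimplexCategory.const ⦋0⦌ ⦋1⦌ ((k + 1 : Fin 2))).op) τ,
      show (S.W.map (SimplexCategory.δ (2 : Fin 3)).op).app (op ⦋1⦌) τ
        = (S.W.δ 2).app (op ⦋1⦌) τ from rfl, hτ 2]
    exact hek'
  · rw [show (S.W.δ 0).app (op ⦋0⦌)
          ((S.W.obj (op ⦋2⦌)).map (SimplexCategory.const ⦋0⦌ ⦋1⦌ ((k + 1 : Fin 2))).op τ)
        = (S.W.map (SimplexCategory.δ (0 : Fin 3)).op).app (op ⦋0⦌)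
          ((S.W.obj (op ⦋2⦌)).map (SimplexCategory.const ⦋0⦌ ⦋1⦌ ((k + 1 : Fin 2))).op τ) from rfl,
      S.wnat (SimplexCategory.δ (0 : Fin 3)) ((SimplexCategory.const ⦋0⦌ ⦋1⦌ ((k + 1 : Fin 2))).op) τ,
      show (S.W.map (SimplexCategory.δ (0 : Fin 3)).op).app (op ⦋1⦌) τ
        = (S.W.δ 0).app (op ⦋1⦌) τ from rfl, hτ 0]
    exact ivert_sigma _ ((k + 1 : Fin 2)) hh2
  · rw [show (S.W.δ 1).app (op ⦋0⦌)
          ((S.W.obj (op ⦋2⦌)).map (SimplexCategory.const ⦋0⦌ ⦋1⦌ ((k + 1 : Fin 2))).op τ)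
        = (S.W.map (SimplexCategory.δ (1 : Fin 3)).op).app (op ⦋0⦌)
          ((S.W.obj (op ⦋2⦌)).map (SimplexCategory.const ⦋0⦌ ⦋1⦌ ((k + 1 : Fin 2))).op τ) from rfl,
      S.wnat (SimplexCategory.δ (1 : Fin 3)) ((SimplexCategory.const ⦋0⦌ ⦋1⦌ ((k + 1 : Fin 2))).op) τ,
      show (S.W.map (SimplexCategory.δ (1 : Fin 3)).op).app (op ⦋1⦌) τ
        = (S.W.δ 1).app (op ⦋1⦌) τ from rfl, hτ 1]
    exact ivert_sigma _ ((k + 1 : Fin 2)) c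
/-- An elementary homotopy transports homotopy equivalences forwards. -/
lemma hoEquiv_step (x y : S.Ob) {g g' : (S.W.obj (op ⦋1⦌)) _⦋0⦌}
    (hr : ∃ e : (S.W.obj (op ⦋1⦌)) _⦋1⦌,
      (S.W.obj (op ⦋1⦌)).δ 1 e = g ∧ (S.W.obj (op ⦋1⦌)).δ 0 e = g' ∧
      (S.W.δ 1).app (op ⦋1⦌) e = (S.W.obj (op ⦋0⦌)).σ 0 x ∧
      (S.W.δ 0).app (op ⦋1⦌) e = (S.W.obj (op ⦋0⦌)).σ 0 y)
    (hg : S.HoEquiv x y g) : S.HoEquiv x y g' := by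
  obtain ⟨e, he1, he0, hs, ht⟩ := hr
  have hek : (S.W.obj (op ⦋1⦌)).map (SimplexCategory.const ⦋0⦌ ⦋1⦌ (0 : Fin 2)).op e = g := by
    rw [← delta_one_eq]; exact he1
  have hek' : (S.W.obj (op ⦋1⦌)).map
      (SimplexCategory.const ⦋0⦌ ⦋1⦌ (1 : Fin 2)).op e = g' := by
    rw [← delta_zero_eq]; exact he0
  obtain ⟨⟨f, hfs, hft, c, hc, hcid⟩, ⟨hh2, hhs, hht, c2, hc2, hc2id⟩⟩ := hg
  exact ⟨⟨f, hfs, hft, c, S.transport x y 0 e hek hek' hs ht f c hfs hft hc, hcid⟩,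
    ⟨hh2, hhs, hht, c2, S.transport2 x y 0 e hek hek' hs ht hh2 c2 hhs hht hc2, hc2id⟩⟩

/-- An elementary homotopy transports homotopy equivalences backwards. -/
lemma hoEquiv_step' (x y : S.Ob) {g g' : (S.W.obj (op ⦋1⦌)) _⦋0⦌}
    (hr : ∃ e : (S.W.obj (op ⦋1⦌)) _⦋1⦌,
      (S.W.obj (op ⦋1⦌)).δ 1 e = g ∧ (S.W.obj (op ⦋1⦌)).δ 0 e = g' ∧
      (S.W.δ 1).app (op ⦋1⦌) e = (S.W.obj (op ⦋0⦌)).σ 0 x ∧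
      (S.W.δ 0).app (op ⦋1⦌) e = (S.W.obj (op ⦋0⦌)).σ 0 y)
    (hg : S.HoEquiv x y g') : S.HoEquiv x y g := by
  obtain ⟨e, he1, he0, hs, ht⟩ := hr
  have hek : (S.W.obj (op ⦋1⦌)).map (SimplexCategory.const ⦋0⦌ ⦋1⦌ (1 : Fin 2)).op e = g' := by
    rw [← delta_zero_eq]; exact he0
  have hek' : (S.W.obj (op ⦋1⦌)).map
      (SimplexCategory.const ⦋0⦌ ⦋1⦌ (0 : Fin 2)).op e = g := by
    rw [← delta_one_eq]; exact he1
  obtain ⟨⟨f, hfs, hft, c, hc, hcid⟩, ⟨hh2, hhs, hht, c2, hc2, hc2id⟩⟩ := hg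
  exact ⟨⟨f, hfs, hft, c, S.transport x y 1 e hek hek' hs ht f c hfs hft hc, hcid⟩,
    ⟨hh2, hhs, hht, c2, S.transport2 x y 1 e hek hek' hs ht hh2 c2 hhs hht hc2, hc2id⟩⟩

end SegalSpace

/-- In a Segal space, any `0`-simplex of `map_W(x,y)` lying in the same path
component as a homotopy equivalence is itself a homotopy equivalence. -/
theorem SegalSpace.hoEquiv_of_homotopic (S : SegalSpace) (x y : S.Ob)
    (g g' : (S.W.obj (op ⦋1⦌)) _⦋0⦌)
    (hgs : S.src g = x) (hgt : S.tgt g = y)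
    (hgs' : S.src g' = x) (hgt' : S.tgt g' = y)
    (he : S.HoEquiv x y g) (hh : S.Htpy x y g g') :
    S.HoEquiv x y g' := by
  have key : ∀ a b : (S.W.obj (op ⦋1⦌)) _⦋0⦌,
      Relation.EqvGen (fun f g =>
        ∃ e : (S.W.obj (op ⦋1⦌)) _⦋1⦌,
          (S.W.obj (op ⦋1⦌)).δ 1 e = f ∧ (S.W.obj (op ⦋1⦌)).δ 0 e = g ∧
          (S.W.δ 1).app (op ⦋1⦌) e = (S.W.obj (op ⦋0⦌)).σ 0 x ∧
          (S.W.δ 0).app (op ⦋1⦌) e = (S.W.obj (op ⦋0⦌)).σ 0 y) a b →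
      (S.HoEquiv x y a ↔ S.HoEquiv x y b) := by
    intro a b hab
    induction hab with
    | rel a b hr => exact ⟨S.hoEquiv_step x y hr, S.hoEquiv_step' x y hr⟩
    | refl a => exact Iff.rfl
    | symm a b _ ih => exact ih.symm
    | trans a b c _ _ ih1 ih2 => exact ih1.trans ih2
  exact (key g g' hh).mp he
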